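/- Let q_n(a,b) := f(a,b-1)·f(n-b,n-a)/Cat(n) be the probability that a uniform path in Cat(n) contains the up-step from (a,b-1) to (a,b), for 0 ≤ a ≤ b-1 and b ≤ n. Then Σ_{a=0}^{b-1} q_n(a,b) = 1 for each fixed 1 ≤ b ≤ n; equivalently Σ_{a=0}^{b-1} f(a,b-1)·f(n-b,n-a) = Cat(n). -/

import Mathlib

open Finset
/-- The ballot number `f(a,b) = C(a+b,a) - C(a+b,a-1)`, with the convention
`C(m,-1) = 0` (case `a = 0`). -/
def ballotZ (a b : ℕ) : ℤ :=
  (a + b).choose a - (if a = 0 then 0 else (a + b).choose (a - 1))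

/-- The ballot number `f(a,b) = C(a+b,a) - C(a+b,a-1)` as a natural number,
with the convention `C(m,-1) = 0` (case `a = 0`). -/
def ballotN (a b : ℕ) : ℕ :=
  (a + b).choose a - (if a = 0 then 0 else (a + b).choose (a - 1))

/-- The Catalan number `Cat(n) = C(2n,n)/(n+1)`. -/
def CatN (n : ℕ) : ℕ := (2 * n).choose n / (n + 1)

lemma ballotZ_zero (b : ℕ) : ballotZ 0 b = 1 := by
  simp [ballotZ]

lemma ballotZ_pascal (a b : ℕ) :
    ballotZ (a + 1) (b + 1) = ballotZ (a + 1) b + ballotZ a (b + 1) := by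
  rcases a with _ | a
  · simp [ballotZ, Nat.choose_one_right]
  · simp only [ballotZ, Nat.succ_ne_zero, if_false, Nat.add_sub_cancel]
    have h1 : a + 1 + 1 + (b + 1) = (a + 1 + 1 + b) + 1 := by ring
    have h2 : a + 1 + 1 + b = (a + 1 + (b + 1)) := by ring
    rw [h1]
    rw [show (a+1+1+b)+1 = (a+1+1+b)+1 from rfl]
    rw [Nat.choose_succ_succ (a+1+1+b) (a+1), Nat.choose_succ_succ (a+1+1+b) a]
    have h3 : (a + 1 + 1 + b).choose (a + 1 + 1) = (a+1+(b+1)).choose (a+1+1) := by rw [h2]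
    have h4 : (a + 1 + 1 + b).choose (a + 1) = (a+1+(b+1)).choose (a+1) := by rw [h2]
    have h5 : (a + 1 + 1 + b).choose a = (a+1+(b+1)).choose a := by rw [h2]
    rw [h3, h4, h5]
    push_cast
    ring

lemma ballotZ_diag_zero (a : ℕ) : ballotZ (a + 1) a = 0 := by
  simp only [ballotZ, Nat.succ_ne_zero, if_false, Nat.add_sub_cancel]
  have : (a + 1 + a).choose (a + 1) = (a + 1 + a).choose a := by
    have := Nat.choose_symm (n := a + 1 + a) (k := a + 1) (by omega)
    have hs : a + 1 + a - (a + 1) = a := by omega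
    rw [hs] at this
    exact this.symm
  rw [this]
  ring

lemma ballotZ_diag (m : ℕ) : ballotZ m (m + 1) = ballotZ (m + 1) (m + 1) := by
  rw [ballotZ_pascal m m, ballotZ_diag_zero m]
  ring

/-- Key exchange identity. -/
lemma keyN : ∀ (k c m : ℕ),
    (∑ a ∈ Finset.range (k + 1), ballotZ a (c + 1) * ballotZ m (k + m + 1 - a)) =
    ∑ a ∈ Finset.range (k + 1), ballotZ a c * ballotZ (m + 1) (k + m + 1 - a) := by
  intro k
  induction k with
  | zero =>
    intro c m
    simp only [Finset.sum_range_one, Nat.zero_add, Nat.sub_zero, ballotZ_zero, one_mul]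
    exact ballotZ_diag m
  | succ k ih =>
    intro c m
    -- LHS: peel off a = 0
    rw [Finset.sum_range_succ' (fun a => ballotZ a (c + 1) * ballotZ m (k + 1 + m + 1 - a))]
    -- rewrite the shifted summand with Pascal
    have hL : ∀ i ∈ Finset.range (k + 1),
        ballotZ (i + 1) (c + 1) * ballotZ m (k + 1 + m + 1 - (i + 1)) =
        ballotZ (i + 1) c * ballotZ m (k + m + 1 - i)
          + ballotZ i (c + 1) * ballotZ m (k + m + 1 - i) := by
      intro i hi
      have hs : k + 1 + m + 1 - (i + 1) = k + m + 1 - i := by omega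
      rw [hs, ballotZ_pascal i c]
      ring
    rw [Finset.sum_congr rfl hL, Finset.sum_add_distrib, ih c m]
    -- RHS: expand second factor with Pascal
    have hR : ∀ a ∈ Finset.range (k + 2),
        ballotZ a c * ballotZ (m + 1) (k + 1 + m + 1 - a) =
        ballotZ a c * ballotZ m (k + 1 + m + 1 - a)
          + ballotZ a c * ballotZ (m + 1) (k + m + 1 - a) := by
      intro a ha
      simp only [Finset.mem_range] at ha
      have hs : k + 1 + m + 1 - a = (k + m + 1 - a) + 1 := by omega
      rw [hs, ballotZ_pascal m (k + m + 1 - a)]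
      ring
    rw [Finset.sum_congr rfl hR, Finset.sum_add_distrib]
    -- second RHS sum: last term vanishes
    have hsplit : (∑ a ∈ Finset.range (k + 2), ballotZ a c * ballotZ (m + 1) (k + m + 1 - a)) =
        ∑ a ∈ Finset.range (k + 1), ballotZ a c * ballotZ (m + 1) (k + m + 1 - a) := by
      rw [Finset.sum_range_succ]
      have : k + m + 1 - (k + 1) = m := by omega
      rw [this, ballotZ_diag_zero m]
      ring
    rw [hsplit]
    -- first RHS sum: peel off a = 0
    rw [Finset.sum_range_succ' (fun a => ballotZ a c * ballotZ m (k + 1 + m + 1 - a))]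
    have hL2 : ∀ i ∈ Finset.range (k + 1),
        ballotZ (i + 1) c * ballotZ m (k + 1 + m + 1 - (i + 1)) =
        ballotZ (i + 1) c * ballotZ m (k + m + 1 - i) := by
      intro i hi
      have hs : k + 1 + m + 1 - (i + 1) = k + m + 1 - i := by omega
      rw [hs]
    rw [Finset.sum_congr rfl hL2]
    simp only [Nat.sub_zero, ballotZ_zero, one_mul]
    ring

lemma Hval : ∀ (c m : ℕ),
    (∑ a ∈ Finset.range (c + 1), ballotZ a c * ballotZ m (c + m + 1 - a)) =
    ballotZ (c + m + 1) (c + m + 1) := by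
  intro c
  induction c with
  | zero =>
    intro m
    simp only [Finset.sum_range_one, Nat.zero_add, Nat.sub_zero, ballotZ_zero, one_mul]
    exact ballotZ_diag m
  | succ c ih =>
    intro m
    -- peel off a = 0
    rw [Finset.sum_range_succ' (fun a => ballotZ a (c + 1) * ballotZ m (c + 1 + m + 1 - a))]
    have hL : ∀ i ∈ Finset.range (c + 1),
        ballotZ (i + 1) (c + 1) * ballotZ m (c + 1 + m + 1 - (i + 1)) =
        ballotZ (i + 1) c * ballotZ m (c + m + 1 - i)
          + ballotZ i (c + 1) * ballotZ m (c + m + 1 - i) := by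
      intro i hi
      have hs : c + 1 + m + 1 - (i + 1) = c + m + 1 - i := by omega
      rw [hs, ballotZ_pascal i c]
      ring
    rw [Finset.sum_congr rfl hL, Finset.sum_add_distrib, keyN c c m]
    -- now combine: Σ F(i+1) c * F m (c+m+1-i) + F 0 * F m (c+m+2)  +  Σ F a c * F (m+1) (c+m+1-a)
    have key : (∑ i ∈ Finset.range (c + 1), ballotZ (i + 1) c * ballotZ m (c + m + 1 - i))
        + ballotZ 0 (c + 1) * ballotZ m (c + 1 + m + 1 - 0)
        = ∑ a ∈ Finset.range (c + 2), ballotZ a c * ballotZ m (c + 1 + m + 1 - a) := by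
      rw [Finset.sum_range_succ' (fun a => ballotZ a c * ballotZ m (c + 1 + m + 1 - a))]
      have hL2 : ∀ i ∈ Finset.range (c + 1),
          ballotZ (i + 1) c * ballotZ m (c + 1 + m + 1 - (i + 1)) =
          ballotZ (i + 1) c * ballotZ m (c + m + 1 - i) := by
        intro i hi
        have hs : c + 1 + m + 1 - (i + 1) = c + m + 1 - i := by omega
        rw [hs]
      rw [Finset.sum_congr rfl hL2]
      simp [ballotZ_zero]
    -- also the extra boundary term of the big sum vanishes
    have hlast : (∑ a ∈ Finset.range (c + 2), ballotZ a c * ballotZ m (c + 1 + m + 1 - a)) =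
        ∑ a ∈ Finset.range (c + 1), ballotZ a c * ballotZ m (c + 1 + m + 1 - a) := by
      rw [Finset.sum_range_succ]
      have h0 : c + 1 + m + 1 - (c + 1) = m + 1 := by omega
      rw [h0]
      -- careful: ballotZ (c+1) c * ballotZ m (m+1), only the first is zero
      rw [ballotZ_diag_zero c]
      ring
    have goal : (∑ i ∈ Finset.range (c + 1), ballotZ (i + 1) c * ballotZ m (c + m + 1 - i))
        + (∑ a ∈ Finset.range (c + 1), ballotZ a c * ballotZ (m + 1) (c + m + 1 - a))
        + ballotZ 0 (c + 1) * ballotZ m (c + 1 + m + 1 - 0)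
        = ballotZ (c + 1 + m + 1) (c + 1 + m + 1) := by
      have comb : (∑ a ∈ Finset.range (c + 1), ballotZ a c * ballotZ m (c + 1 + m + 1 - a))
          + (∑ a ∈ Finset.range (c + 1), ballotZ a c * ballotZ (m + 1) (c + m + 1 - a))
          = ∑ a ∈ Finset.range (c + 1), ballotZ a c * ballotZ (m + 1) (c + (m + 1) + 1 - a) := by
        rw [← Finset.sum_add_distrib]
        refine Finset.sum_congr rfl fun a ha => ?_
        simp only [Finset.mem_range] at ha
        have hs1 : c + (m + 1) + 1 - a = (c + m + 1 - a) + 1 := by omega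
        have hs2 : c + 1 + m + 1 - a = (c + m + 1 - a) + 1 := by omega
        rw [hs1, hs2, ballotZ_pascal m (c + m + 1 - a)]
        ring
      calc (∑ i ∈ Finset.range (c + 1), ballotZ (i + 1) c * ballotZ m (c + m + 1 - i))
            + (∑ a ∈ Finset.range (c + 1), ballotZ a c * ballotZ (m + 1) (c + m + 1 - a))
            + ballotZ 0 (c + 1) * ballotZ m (c + 1 + m + 1 - 0)
          = ((∑ i ∈ Finset.range (c + 1), ballotZ (i + 1) c * ballotZ m (c + m + 1 - i))
            + ballotZ 0 (c + 1) * ballotZ m (c + 1 + m + 1 - 0))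
            + (∑ a ∈ Finset.range (c + 1), ballotZ a c * ballotZ (m + 1) (c + m + 1 - a)) := by
              ring
        _ = (∑ a ∈ Finset.range (c + 2), ballotZ a c * ballotZ m (c + 1 + m + 1 - a))
            + (∑ a ∈ Finset.range (c + 1), ballotZ a c * ballotZ (m + 1) (c + m + 1 - a)) := by
              rw [key]
        _ = (∑ a ∈ Finset.range (c + 1), ballotZ a c * ballotZ m (c + 1 + m + 1 - a))
            + (∑ a ∈ Finset.range (c + 1), ballotZ a c * ballotZ (m + 1) (c + m + 1 - a)) := by
              rw [hlast]
        _ = ∑ a ∈ Finset.range (c + 1), ballotZ a c * ballotZ (m + 1) (c + (m + 1) + 1 - a) := by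
              have : (∑ a ∈ Finset.range (c + 1), ballotZ a c * ballotZ m (c + 1 + m + 1 - a))
                  + (∑ a ∈ Finset.range (c + 1), ballotZ a c * ballotZ (m + 1) (c + m + 1 - a))
                  = ∑ a ∈ Finset.range (c + 1), ballotZ a c * ballotZ (m + 1) (c + (m + 1) + 1 - a) := comb
              linarith [this]
        _ = ballotZ (c + (m + 1) + 1) (c + (m + 1) + 1) := ih (m + 1)
        _ = ballotZ (c + 1 + m + 1) (c + 1 + m + 1) := by
              congr 1 <;> omega
    linarith [goal]

lemma ballotN_cast (a b : ℕ) (h : a ≤ b) : ((ballotN a b : ℕ) : ℤ) = ballotZ a b := by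
  rcases a with _ | a
  · simp [ballotN, ballotZ]
  · simp only [ballotN, ballotZ, Nat.succ_ne_zero, if_false, Nat.add_sub_cancel]
    have hle : (a + 1 + b).choose a ≤ (a + 1 + b).choose (a + 1) := by
      apply Nat.choose_le_succ_of_lt_half_left
      omega
    rw [Nat.cast_sub hle]

lemma ballotN_diag_eq_catalan (n : ℕ) : ballotN n n = catalan n := by
  rcases n with _ | n
  · simp [ballotN]
  · have hmul : (n + 1 + 1) * ((n + 1 + n + 1).choose (n + 1) - (n + 1 + n + 1).choose n) =
        (n + 1 + 1) * catalan (n + 1) := by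
      rw [succ_mul_catalan_eq_centralBinom]
      have hkey : (n + 1 + n + 1).choose (n + 1) * (n + 1) =
          (n + 1 + n + 1).choose n * (n + 1 + n + 1 - n) := Nat.choose_succ_right_eq _ n
      have hs : n + 1 + n + 1 - n = n + 2 := by omega
      rw [hs] at hkey
      have hle : (n + 1 + n + 1).choose n ≤ (n + 1 + n + 1).choose (n + 1) := by
        apply Nat.choose_le_succ_of_lt_half_left
        omega
      have hcb : Nat.centralBinom (n + 1) = (n + 1 + n + 1).choose (n + 1) := by
        unfold Nat.centralBinom
        congr 1
        omega
      rw [hcb]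
      -- (n+2) * (A - B) = A where A*(n+1) = B*(n+2)
      set A := (n + 1 + n + 1).choose (n + 1) with hA
      set B := (n + 1 + n + 1).choose n with hB
      -- hkey : A * (n+1) = B * (n+2), hle : B ≤ A, goal : (n+1+1) * (A - B) = A
      have hms : (n + 1 + 1) * (A - B) = (n + 1 + 1) * A - (n + 1 + 1) * B := by
        rw [Nat.mul_sub]
      have h2 : (n + 1 + 1) * B = (n + 1) * A := by
        calc (n + 1 + 1) * B = B * (n + 2) := by ring
          _ = A * (n + 1) := hkey.symm
          _ = (n + 1) * A := by ring
      have h3 : (n + 1 + 1) * A = (n + 1) * A + A := by ring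
      rw [hms, h2, h3, Nat.add_sub_cancel_left]
    have h2 : (0 : ℕ) < n + 1 + 1 := by omega
    have := Nat.eq_of_mul_eq_mul_left h2 hmul
    simpa [ballotN, Nat.succ_ne_zero, show n + 1 + (n + 1) = n + 1 + n + 1 by omega] using this

lemma catN_eq_catalan (n : ℕ) : CatN n = catalan n := by
  rw [catalan_eq_centralBinom_div]
  unfold CatN Nat.centralBinom
  rfl

/-- For each `1 ≤ b ≤ n`, `Σ_{a=0}^{b-1} q_n(a,b) = 1`, where
`q_n(a,b) = f(a,b-1)·f(n-b,n-a)/Cat(n)`; equivalently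
`Σ_{a=0}^{b-1} f(a,b-1)·f(n-b,n-a) = Cat(n)`. -/
theorem stmt11 (n b : ℕ) (hb : 1 ≤ b) (hbn : b ≤ n) :
    (∑ a ∈ Finset.range b,
        ((ballotN a (b - 1) * ballotN (n - b) (n - a) : ℕ) : ℚ) / (CatN n : ℚ)) = 1 ∧
    (∑ a ∈ Finset.range b, ballotN a (b - 1) * ballotN (n - b) (n - a)) = CatN n := by
  have main : (∑ a ∈ Finset.range b, ballotN a (b - 1) * ballotN (n - b) (n - a)) = CatN n := by
    have hZ : ((∑ a ∈ Finset.range b, ballotN a (b - 1) * ballotN (n - b) (n - a) : ℕ) : ℤ)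
        = ((CatN n : ℕ) : ℤ) := by
      push_cast
      have hc : b - 1 + (n - b) + 1 = n := by omega
      have step : (∑ a ∈ Finset.range b,
          (ballotN a (b - 1) : ℤ) * (ballotN (n - b) (n - a) : ℤ))
          = ∑ a ∈ Finset.range ((b - 1) + 1),
              ballotZ a (b - 1) * ballotZ (n - b) ((b - 1) + (n - b) + 1 - a) := by
        have hb1 : (b - 1) + 1 = b := by omega
        rw [hb1]
        refine Finset.sum_congr rfl fun a ha => ?_
        simp only [Finset.mem_range] at ha
        rw [ballotN_cast a (b - 1) (by omega), ballotN_cast (n - b) (n - a) (by omega)]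
        congr 2
        omega
      rw [step, Hval (b - 1) (n - b), hc]
      rw [← ballotN_cast n n le_rfl]
      rw [ballotN_diag_eq_catalan, catN_eq_catalan]
    exact_mod_cast hZ
  refine ⟨?_, main⟩
  rw [← Finset.sum_div]
  have hCat : (CatN n : ℚ) ≠ 0 := by
    rw [catN_eq_catalan]
    have hpos : 0 < catalan n := by
      have h1 : (n + 1) * catalan n = Nat.centralBinom n := succ_mul_catalan_eq_centralBinom n
      have h2 : 0 < Nat.centralBinom n := Nat.centralBinom_pos n
      by_contra h
      simp only [not_lt, Nat.le_zero] at h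
      rw [h, Nat.mul_zero] at h1
      omega
    exact_mod_cast hpos.ne'
  rw [show (∑ a ∈ Finset.range b,
      ((ballotN a (b - 1) * ballotN (n - b) (n - a) : ℕ) : ℚ)) = ((CatN n : ℕ) : ℚ) by
    exact_mod_cast congrArg (fun x : ℕ => (x : ℚ)) main]
  exact div_self hCat
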